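/- arXiv:2405.19547 — 2 statements merged into one kernel-verified Lean document; each statement's English description precedes it below -/
import Mathlib

section
/- Let n ≥ 2, let G_v, G_l ∈ ℝ^{d×r}, and let x_1^v,…,x_n^v and x_1^l,…,x_n^l be vectors in ℝ^d. Define s_{ij} = ⟨G_v^⊤ x_i^v, G_l^⊤ x_j^l⟩, the means x̄^v = (1/n)Σ_{i=1}^n x_i^v and x̄^l = (1/n)Σ_{i=1}^n x_i^l, and the matrix Γ = (1/(n−1)) Σ_{i=1}^n x_i^v (x_i^l)^⊤ − (n/(n−1)) x̄^v (x̄^l)^⊤. Then ( Σ_{i=1}^n Σ_{j=1}^n (s_{ij} − s_{ii}) ) / (n(n−1)) = −Tr( G_v^⊤ Γ G_l ). Consequently, the regularized linear contrastive objective L(G_v,G_l) = ( Σ_{i,j} (s_{ij} − s_{ii}) )/(n(n−1)) + (ρ/2)·(n/(n−1))·‖G_v G_l^⊤‖_F² equals −Tr(G_v^⊤ Γ G_l) + (ρ/2)·(n/(n−1))·‖G_v G_l^⊤‖_F². -/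
open scoped BigOperators
open Matrix

lemma trace_vecMulVec_aux {d r : ℕ} (Gv Gl : Matrix (Fin d) (Fin r) ℝ)
    (a b : Fin d → ℝ) :
    Matrix.trace (Gv.transpose * Matrix.vecMulVec a b * Gl)
      = dotProduct (Gv.transpose.mulVec a) (Gl.transpose.mulVec b) := by
  simp only [Matrix.trace, Matrix.diag, Matrix.mul_apply, Matrix.vecMulVec_apply,
    dotProduct, Matrix.mulVec, Matrix.transpose_apply, Finset.sum_mul,
    Finset.mul_sum]
  rw [Finset.sum_comm]
  conv_lhs => rw [Finset.sum_comm]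
  refine Finset.sum_congr rfl fun k _ => ?_
  refine Finset.sum_congr rfl fun i _ => ?_
  refine Finset.sum_congr rfl fun j _ => ?_
  ring

lemma mulVec_finsum_aux {d r n : ℕ} (A : Matrix (Fin d) (Fin r) ℝ)
    (v : Fin n → Fin d → ℝ) :
    A.transpose.mulVec (∑ i, v i) = ∑ i, A.transpose.mulVec (v i) := by
  ext k
  simp [Matrix.mulVec, dotProduct, Finset.mul_sum, Finset.sum_apply]
  rw [Finset.sum_comm]

lemma sum_dotProduct_aux {r n : ℕ} (u : Fin n → Fin r → ℝ) (w : Fin n → Fin r → ℝ) :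
    dotProduct (∑ i, u i) (∑ j, w j)
      = ∑ i, ∑ j, dotProduct (u i) (w j) := by
  simp only [dotProduct, Finset.sum_apply, Finset.sum_mul_sum]
  rw [Finset.sum_comm]
  exact Finset.sum_congr rfl fun i _ => Finset.sum_comm

/-- The (unregularized) linear contrastive objective equals `-Tr(Gvᵀ Γ Gl)`,
and hence the regularized objective equals `-Tr(Gvᵀ Γ Gl)` plus the regularizer.
Here Frobenius norm squared is expressed as `Tr(AᵀA)`. -/
theorem contrastive_objective_eq_neg_trace
    (n d r : ℕ) (hn : 2 ≤ n) (ρ : ℝ)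
    (Gv Gl : Matrix (Fin d) (Fin r) ℝ)
    (xv xl : Fin n → Fin d → ℝ)
    (s : Fin n → Fin n → ℝ)
    (hs : ∀ i j, s i j = dotProduct (Gv.transpose.mulVec (xv i)) (Gl.transpose.mulVec (xl j)))
    (xbarv xbarl : Fin d → ℝ)
    (hxbarv : xbarv = (1 / (n : ℝ)) • ∑ i, xv i)
    (hxbarl : xbarl = (1 / (n : ℝ)) • ∑ i, xl i)
    (Γ : Matrix (Fin d) (Fin d) ℝ)
    (hΓ : Γ = (1 / ((n : ℝ) - 1)) • ∑ i, Matrix.vecMulVec (xv i) (xl i)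
        - ((n : ℝ) / ((n : ℝ) - 1)) • Matrix.vecMulVec xbarv xbarl) :
    (∑ i, ∑ j, (s i j - s i i)) / ((n : ℝ) * ((n : ℝ) - 1))
      = - Matrix.trace (Gv.transpose * Γ * Gl)
    ∧ (∑ i, ∑ j, (s i j - s i i)) / ((n : ℝ) * ((n : ℝ) - 1))
        + (ρ / 2) * ((n : ℝ) / ((n : ℝ) - 1))
            * Matrix.trace ((Gv * Gl.transpose).transpose * (Gv * Gl.transpose))
      = - Matrix.trace (Gv.transpose * Γ * Gl)
        + (ρ / 2) * ((n : ℝ) / ((n : ℝ) - 1))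
            * Matrix.trace ((Gv * Gl.transpose).transpose * (Gv * Gl.transpose)) := by
  have hn0 : (n : ℝ) ≠ 0 := by positivity
  have hn1 : (n : ℝ) - 1 ≠ 0 := by
    have : (2 : ℝ) ≤ (n : ℝ) := by exact_mod_cast hn
    linarith
  have key : Matrix.trace (Gv.transpose * Γ * Gl)
      = (1 / ((n : ℝ) - 1)) * ∑ i, s i i
        - ((n : ℝ) / ((n : ℝ) - 1)) * ((1 / (n : ℝ)) * ((1 / (n : ℝ))
            * ∑ i, ∑ j, s i j)) := by
    subst hΓ hxbarv hxbarl
    rw [Matrix.mul_sub, Matrix.sub_mul, Matrix.trace_sub,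
      Matrix.mul_smul, Matrix.smul_mul, Matrix.trace_smul,
      Matrix.mul_smul, Matrix.smul_mul, Matrix.trace_smul,
      Matrix.mul_sum, Matrix.sum_mul, Matrix.trace_sum]
    simp only [trace_vecMulVec_aux, Matrix.mulVec_smul, smul_dotProduct,
      dotProduct_smul, mulVec_finsum_aux, sum_dotProduct_aux, smul_eq_mul]
    simp only [← hs]
    try ring
  have hsum : ∑ i, ∑ j, (s i j - s i i)
      = (∑ i, ∑ j, s i j) - (n : ℝ) * ∑ i, s i i := by
    rw [Finset.mul_sum, ← Finset.sum_sub_distrib]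
    refine Finset.sum_congr rfl fun i _ => ?_
    rw [Finset.sum_sub_distrib, Finset.sum_const, Finset.card_univ, Fintype.card_fin,
      nsmul_eq_mul]
  have h1 : (∑ i, ∑ j, (s i j - s i i)) / ((n : ℝ) * ((n : ℝ) - 1))
      = - Matrix.trace (Gv.transpose * Γ * Gl) := by
    rw [key, hsum]
    field_simp
    try ring
  exact ⟨h1, by rw [h1]⟩
end

section
/- Let z_1^v,…,z_n^v and z_1^l,…,z_n^l be unit vectors in ℝ^d (‖z_i^v‖ = ‖z_i^l‖ = 1 for all i). Then (1/n)·‖ Σ_{i=1}^n z_i^v (z_i^v)^⊤ − Σ_{i=1}^n z_i^v (z_i^l)^⊤ ‖_F ≤ √( 2·( 1 − (1/n) Σ_{i=1}^n ⟨z_i^v, z_i^l⟩ ) ). In particular, the error incurred by using the vision-only empirical covariance Σ_i z_i^v (z_i^v)^⊤ as a proxy for the vision–language empirical cross-covariance Σ_i z_i^v (z_i^l)^⊤ is controlled by the average alignment (1/n)Σ_i ⟨z_i^v, z_i^l⟩ between the visual and language latent vectors. -/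
open Matrix
open scoped RealInnerProductSpace BigOperators

/-- The Frobenius-norm error of using the vision-only empirical covariance as a
proxy for the vision–language cross-covariance is controlled by the average
alignment between the visual and language latent unit vectors. -/
theorem vision_only_proxy_error_bound
    (n d : ℕ) (hn : 1 ≤ n)
    (zv zl : Fin n → EuclideanSpace ℝ (Fin d))
    (hzv : ∀ i, ‖zv i‖ = 1) (hzl : ∀ i, ‖zl i‖ = 1) :
    (1 / (n : ℝ)) * Real.sqrt (∑ j : Fin d, ∑ k : Fin d,
        ((∑ i, Matrix.vecMulVec (fun a => zv i a) (fun a => zv i a)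
          - ∑ i, Matrix.vecMulVec (fun a => zv i a) (fun a => zl i a)) j k) ^ 2)
      ≤ Real.sqrt (2 * (1 - (1 / (n : ℝ)) * ∑ i, ⟪zv i, zl i⟫)) := by
  have hnpos : (0:ℝ) < n := by exact_mod_cast hn
  set X : Fin n → EuclideanSpace ℝ (Fin d × Fin d) :=
    fun i => WithLp.toLp 2 (fun p : Fin d × Fin d => zv i p.1 * (zv i p.2 - zl i p.2)) with hX
  have normsq : ∀ (m : ℕ) (x : EuclideanSpace ℝ (Fin m)), ‖x‖^2 = ∑ a, (x a)^2 := by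
    intro m x
    rw [← real_inner_self_eq_norm_sq, PiLp.inner_apply]
    simp [sq]
  have normsq' : ∀ (x : EuclideanSpace ℝ (Fin d × Fin d)), ‖x‖^2 = ∑ a, (x a)^2 := by
    intro x
    rw [← real_inner_self_eq_norm_sq, PiLp.inner_apply]
    simp [sq]
  have hS : (∑ j : Fin d, ∑ k : Fin d,
        ((∑ i, Matrix.vecMulVec (fun a => zv i a) (fun a => zv i a)
          - ∑ i, Matrix.vecMulVec (fun a => zv i a) (fun a => zl i a)) j k) ^ 2)
      = ‖∑ i, X i‖^2 := by
    rw [normsq', ← Fintype.sum_prod_type']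
    refine Finset.sum_congr rfl fun p _ => ?_
    congr 1
    simp only [Matrix.sub_apply, Matrix.sum_apply, Matrix.vecMulVec_apply]
    rw [← Finset.sum_sub_distrib]
    have : (∑ i, X i) p = ∑ i, X i p := by
      exact (congrFun (WithLp.ofLp_sum (s := Finset.univ) (f := X)) p).trans (Finset.sum_apply _ _ _)
    rw [this]
    refine Finset.sum_congr rfl fun i _ => ?_
    simp [hX, mul_sub]
  have hXnorm : ∀ i, ‖X i‖^2 = 2 - 2 * ⟪zv i, zl i⟫ := by
    intro i
    rw [normsq']
    have : ∑ a : Fin d × Fin d, (X i a)^2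
        = (∑ j, (zv i j)^2) * (∑ k, (zv i k - zl i k)^2) := by
      rw [Fintype.sum_prod_type, Finset.sum_mul_sum]
      refine Finset.sum_congr rfl fun j _ => Finset.sum_congr rfl fun k _ => ?_
      simp [hX, mul_pow]
    rw [this, ← normsq d (zv i)]
    have h2 : (∑ k, (zv i k - zl i k)^2) = ‖zv i - zl i‖^2 := by
      rw [normsq d (zv i - zl i)]
      refine Finset.sum_congr rfl fun k _ => ?_
      simp
    rw [h2, hzv i, @norm_sub_sq_real, hzv i, hzl i]
    ring
  rw [hS, Real.sqrt_sq (norm_nonneg _)]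
  have h1 : ‖∑ i, X i‖ ≤ ∑ i, ‖X i‖ := norm_sum_le _ _
  have h2 : (∑ i, ‖X i‖)^2 ≤ (n : ℝ) * ∑ i, ‖X i‖^2 := by
    have := Finset.sum_mul_sq_le_sq_mul_sq Finset.univ (fun _ : Fin n => (1:ℝ))
      (fun i => ‖X i‖)
    simpa [Finset.card_univ] using this
  have h3 : (∑ i, ‖X i‖^2) = 2 * n - 2 * ∑ i, ⟪zv i, zl i⟫ := by
    simp only [hXnorm]
    rw [Finset.sum_sub_distrib, ← Finset.mul_sum]
    simp [Finset.card_univ]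
    ring
  have hsum_nn : (0:ℝ) ≤ ∑ i, ‖X i‖^2 := Finset.sum_nonneg fun i _ => sq_nonneg _
  have hT : 2 * (1 - 1/(n:ℝ) * ∑ i, ⟪zv i, zl i⟫) = (∑ i, ‖X i‖^2) / n := by
    rw [h3]; field_simp
  have hx2 : ‖∑ i, X i‖^2 ≤ (n : ℝ) * ∑ i, ‖X i‖^2 := by
    calc ‖∑ i, X i‖^2 ≤ (∑ i, ‖X i‖)^2 := by
          apply pow_le_pow_left₀ (norm_nonneg _) h1
      _ ≤ _ := h2
  rw [show (1:ℝ)/n * ‖∑ i, X i‖ = Real.sqrt ((‖∑ i, X i‖/n)^2) by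
    rw [Real.sqrt_sq (by positivity)]; ring]
  apply Real.sqrt_le_sqrt
  rw [hT, div_pow, div_le_div_iff₀ (by positivity) hnpos]
  calc ‖∑ i, X i‖^2 * n ≤ ((n:ℝ) * ∑ i, ‖X i‖^2) * n :=
        mul_le_mul_of_nonneg_right hx2 hnpos.le
    _ = (∑ i, ‖X i‖^2) * (n:ℝ)^2 := by ring
end
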